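/- Let A = {A_t}_{t∈G} and B = {B_t}_{t∈G} be saturated C*-algebraic bundles over a finite group G with C = ⊕ A_t, D = ⊕ B_t unital, A = A_e, B = B_e containing the respective units, and suppose A' ∩ C = C1. Suppose the induced inclusions A ⊂ C and B ⊂ D are strongly Morita equivalent. Let f be an automorphism of G and λ an action of G on a C₁-D₁-equivalence bimodule Z implementing a strong Morita equivalence between the induced action α^A on the basic construction C₁ and the action β = α^B ∘ f on D₁. Let Z_t = e_A · Z · β_t(e_B) with the C-D-bimodule structure defined via λ (namely e_A x α_t^A(e_A) ◇ z = e_A x α_t^A(e_A) · λ_t(z), ⟨z, w⟩ taken as twisted C₁- and D₁-valued inner products as in the paper). Then Z = {Z_t}_{t∈G} satisfies conditions (4R) and (4L) of Abadie–Ferraro: the right D-valued inner product is D-linear in the second variable and satisfies ⟨z, w⟩_D^♯ = ⟨w, z⟩_D, and the left C-valued inner product is C-linear in the first variable and satisfies ⟨z, w⟩_C^♯ = ⟨w, z⟩_C. -/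
import Mathlib


noncomputable section

open scoped BigOperators

/-- The data and axioms of a Hilbert `C`-`D`-bimodule in the sense of
Brown–Mingo–Shen: a bimodule over the C*-algebras `C` and `D` carrying a
left `C`-valued and a right `D`-valued inner product, compatible with the
module actions and satisfying the associativity relation
`⟨x, y⟩_C • z = x • ⟨y, z⟩_D`. -/
structure HilbertBimod (C : Type*) (D : Type*) (Y : Type*)
    [NormedRing C] [StarRing C] [NormedRing D] [StarRing D]
    [NormedAddCommGroup Y] where
  lsmul : C → Y → Y
  rsmul : Y → D → Y
  linner : Y → Y → C
  rinner : Y → Y → D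
  lsmul_add : ∀ c x y, lsmul c (x + y) = lsmul c x + lsmul c y
  add_lsmul : ∀ c c' x, lsmul (c + c') x = lsmul c x + lsmul c' x
  mul_lsmul : ∀ c c' x, lsmul (c * c') x = lsmul c (lsmul c' x)
  one_lsmul : ∀ x, lsmul 1 x = x
  rsmul_add : ∀ x y d, rsmul (x + y) d = rsmul x d + rsmul y d
  add_rsmul : ∀ x d d', rsmul x (d + d') = rsmul x d + rsmul x d'
  rsmul_mul : ∀ x d d', rsmul x (d * d') = rsmul (rsmul x d) d'
  rsmul_one : ∀ x, rsmul x 1 = x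
  lsmul_rsmul : ∀ c x d, rsmul (lsmul c x) d = lsmul c (rsmul x d)
  linner_add_left : ∀ x y z, linner (x + y) z = linner x z + linner y z
  linner_add_right : ∀ x y z, linner x (y + z) = linner x y + linner x z
  linner_lsmul_left : ∀ c x y, linner (lsmul c x) y = c * linner x y
  linner_star : ∀ x y, star (linner x y) = linner y x
  rinner_add_left : ∀ x y z, rinner (x + y) z = rinner x z + rinner y z
  rinner_add_right : ∀ x y z, rinner x (y + z) = rinner x y + rinner x z
  rinner_rsmul_right : ∀ x y d, rinner x (rsmul y d) = rinner x y * d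
  rinner_star : ∀ x y, star (rinner x y) = rinner y x
  inner_assoc : ∀ x y z, lsmul (linner x y) z = rsmul x (rinner y z)
  norm_linner_self : ∀ x, ‖linner x x‖ = ‖x‖ ^ 2
  norm_rinner_self : ∀ x, ‖rinner x x‖ = ‖x‖ ^ 2

/-- Fullness of the left inner product: the closed linear span of the left
inner products is all of `C`. -/
def HilbertBimod.LFull {C D Y : Type*} [NormedRing C] [StarRing C] [NormedAlgebra ℂ C]
    [NormedRing D] [StarRing D] [NormedAddCommGroup Y]
    (E : HilbertBimod C D Y) : Prop :=
  (Submodule.span ℂ {c : C | ∃ x y : Y, c = E.linner x y}).topologicalClosure = ⊤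

/-- Fullness of the right inner product. -/
def HilbertBimod.RFull {C D Y : Type*} [NormedRing C] [StarRing C]
    [NormedRing D] [StarRing D] [NormedAlgebra ℂ D] [NormedAddCommGroup Y]
    (E : HilbertBimod C D Y) : Prop :=
  (Submodule.span ℂ {d : D | ∃ x y : Y, d = E.rinner x y}).topologicalClosure = ⊤

section TwistedBimodule

variable {G : Type*} [Group G] {C₁ D₁ Z : Type*}
  [NormedRing C₁] [StarRing C₁] [NormedAlgebra ℂ C₁]
  [NormedRing D₁] [StarRing D₁] [NormedAlgebra ℂ D₁]
  [NormedAddCommGroup Z]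

/-- The element `e_A · z · β_t(e_B)` of the fiber `Z_t = e_A · Z · β_t(e_B)`. -/
def Zel (E : HilbertBimod C₁ D₁ Z) (eA : C₁) (eB : D₁)
    (β : G → D₁ ≃⋆ₐ[ℂ] D₁) (t : G) (z : Z) : Z :=
  E.lsmul eA (E.rsmul z (β t eB))

/-- The left action `c ◇ p = c · λ_t(p)` of a degree-`t` element `c` of
`C = ⊕_t e_A C₁ α_t(e_A)` on `W = ⊕_t Z_t`. -/
def Lact (E : HilbertBimod C₁ D₁ Z) (lam : G → Z → Z) (t : G) (c : C₁) (p : Z) : Z :=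
  E.lsmul c (lam t p)

/-- The right action `p ◇ d = p · β_t(d)` of `d ∈ D = ⊕_s e_B D₁ β_s(e_B)` on a
degree-`t` element `p ∈ Z_t` of `W = ⊕_t Z_t`. -/
def Ract (E : HilbertBimod C₁ D₁ Z) (β : G → D₁ ≃⋆ₐ[ℂ] D₁) (t : G) (p : Z) (d : D₁) : Z :=
  E.rsmul p (β t d)

/-- The `C`-valued inner product `⟨p , q⟩_C = ⟨p , λ_{ts⁻¹}(q)⟩_{C₁}` of
`p ∈ Z_t` and `q ∈ Z_s`. -/
def Lin (E : HilbertBimod C₁ D₁ Z) (lam : G → Z → Z) (t s : G) (p q : Z) : C₁ :=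
  E.linner p (lam (t * s⁻¹) q)

/-- The `D`-valued inner product `⟨p , q⟩_D = β_{t⁻¹}(⟨p , q⟩_{D₁})` of
`p ∈ Z_t` and `q ∈ Z_s`. -/
def Rin (E : HilbertBimod C₁ D₁ Z) (β : G → D₁ ≃⋆ₐ[ℂ] D₁) (t : G) (p q : Z) : D₁ :=
  β t⁻¹ (E.rinner p q)

end TwistedBimodule

/-- Lemma 4.1 of the paper.
With `Z_t = e_A · Z · β_t(e_B)` and the bimodule operations on
`W = ⊕_{t∈G} Z_t` obtained by twisting the `C₁`-`D₁`-bimodule structure of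
`Z` by `λ` and `β`, the bundle `{Z_t}_{t∈G}` satisfies conditions (4R) and
(4L) of Abadie–Ferraro:  the right `D`-valued inner product is `D`-linear in
the second variable and satisfies `⟨z , w⟩_D^♯ = ⟨w , z⟩_D`, and the left
`C`-valued inner product is `C`-linear in the first variable and satisfies
`⟨z , w⟩_C^♯ = ⟨w , z⟩_C`. -/
theorem twisted_bundle_conditions_4R_4L
    {G : Type} [Group G] [Fintype G] [DecidableEq G]
    {C₁ D₁ : Type} [CStarAlgebra C₁] [CStarAlgebra D₁]
    -- the Jones projections `e_A ∈ C₁`, `e_B ∈ D₁`: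
    (eA : C₁) (heA_star : star eA = eA) (heA_idem : eA * eA = eA)
    (eB : D₁) (heB_star : star eB = eB) (heB_idem : eB * eB = eB)
    -- the action `α = α^𝒜` of `G` on `C₁` and the action `β = α^ℬ ∘ f` on `D₁`:
    (α : G → C₁ ≃⋆ₐ[ℂ] C₁)
    (hα_one : ∀ z : C₁, α 1 z = z)
    (hα_mul : ∀ t s : G, ∀ z : C₁, α (t * s) z = α t (α s z))
    (β : G → D₁ ≃⋆ₐ[ℂ] D₁)
    (hβ_one : ∀ z : D₁, β 1 z = z)
    (hβ_mul : ∀ t s : G, ∀ z : D₁, β (t * s) z = β t (β s z))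
    -- the `C₁`-`D₁`-equivalence bimodule `Z`:
    {Z : Type} [NormedAddCommGroup Z] [CompleteSpace Z]
    (E : HilbertBimod C₁ D₁ Z) (hlF : E.LFull) (hrF : E.RFull)
    -- the action `λ` of `G` on `Z` implementing the strong Morita
    -- equivalence of `α` and `β`:
    (lam : G → Z → Z)
    (hlam_add : ∀ t : G, ∀ x y : Z, lam t (x + y) = lam t x + lam t y)
    (hlam_one : ∀ x : Z, lam 1 x = x)
    (hlam_mul : ∀ t s : G, ∀ x : Z, lam (t * s) x = lam t (lam s x))
    (hlam_lsmul : ∀ t : G, ∀ (c : C₁) (x : Z),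
      lam t (E.lsmul c x) = E.lsmul (α t c) (lam t x))
    (hlam_rsmul : ∀ t : G, ∀ (x : Z) (d : D₁),
      lam t (E.rsmul x d) = E.rsmul (lam t x) (β t d))
    (hlam_linner : ∀ t : G, ∀ x y : Z,
      E.linner (lam t x) (lam t y) = α t (E.linner x y))
    (hlam_rinner : ∀ t : G, ∀ x y : Z,
      E.rinner (lam t x) (lam t y) = β t (E.rinner x y))
    :
    -- (4R): `⟨z_t , w_s ◇ d⟩_D = ⟨z_t , w_s⟩_D • d` for `d = e_B y β_r(e_B)` …
    (∀ t s r : G, ∀ z w : Z, ∀ y : D₁,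
      Rin E β t (Zel E eA eB β t z)
          (Ract E β s (Zel E eA eB β s w) (eB * y * β r eB))
        = Rin E β t (Zel E eA eB β t z) (Zel E eA eB β s w)
            * β (t⁻¹ * s) (eB * y * β r eB)) ∧
    -- … and `⟨z_t , w_s⟩_D^♯ = ⟨w_s , z_t⟩_D`:
    (∀ t s : G, ∀ z w : Z,
      β (t⁻¹ * s)⁻¹ (star (Rin E β t (Zel E eA eB β t z) (Zel E eA eB β s w)))
        = Rin E β s (Zel E eA eB β s w) (Zel E eA eB β t z)) ∧
    -- (4L): `⟨c ◇ z_t , w_s⟩_C = c • ⟨z_t , w_s⟩_C` for `c = e_A x α_r(e_A)` …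
    (∀ t s r : G, ∀ z w : Z, ∀ x : C₁,
      Lin E lam (r * t) s
          (Lact E lam r (eA * x * α r eA) (Zel E eA eB β t z)) (Zel E eA eB β s w)
        = (eA * x * α r eA) * α r (Lin E lam t s (Zel E eA eB β t z) (Zel E eA eB β s w))) ∧
    -- … and `⟨z_t , w_s⟩_C^♯ = ⟨w_s , z_t⟩_C`:
    (∀ t s : G, ∀ z w : Z,
      α (t * s⁻¹)⁻¹ (star (Lin E lam t s (Zel E eA eB β t z) (Zel E eA eB β s w)))
        = Lin E lam s t (Zel E eA eB β s w) (Zel E eA eB β t z)) := by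
  refine ⟨?_, ?_, ?_, ?_⟩
  · -- (4R) linearity
    intro t s r z w y
    show (β t⁻¹) (E.rinner _ (E.rsmul _ (β s (eB * y * β r eB)))) = _
    rw [E.rinner_rsmul_right, map_mul, ← hβ_mul]
    rfl
  · -- (4R) involution
    intro t s z w
    show (β (t⁻¹ * s)⁻¹) (star ((β t⁻¹) (E.rinner _ _))) = _
    rw [← map_star, E.rinner_star, ← hβ_mul]
    have h : (t⁻¹ * s)⁻¹ * t⁻¹ = s⁻¹ := by group
    rw [h]
    rfl
  · -- (4L) linearity
    intro t s r z w x
    simp only [Lin, Lact]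
    rw [E.linner_lsmul_left]
    congr 1
    have h1 : (r * t) * s⁻¹ = r * (t * s⁻¹) := by group
    rw [h1, hlam_mul, hlam_linner]
  · -- (4L) involution
    intro t s z w
    simp only [Lin]
    rw [E.linner_star, ← hlam_linner, ← hlam_mul]
    have h1 : (t * s⁻¹)⁻¹ * (t * s⁻¹) = (1 : G) := by group
    have h2 : (t * s⁻¹)⁻¹ = s * t⁻¹ := by group
    rw [h1, hlam_one, h2]
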